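/- (Pareto characterization for polymatroids, necessity direction) If (x,p) is a Pareto-optimal, budget-feasible outcome (x ∈ P, p ≤ B) for a polymatroidal environment P defined by monotone submodular f, then x([n]) = f([n]), and for any player i with p_i < B_i and any player j with v_j < v_i, there exists a set S with x(S) = f(S), i ∈ S, j ∉ S. -/

import Mathlib

/-- `(x, p)` is Pareto-optimal in environment `X` with values `v`. -/
def ParetoOptimal (n : ℕ) (X : Set (Fin n → ℝ)) (v : Fin n → ℝ)
    (x p : Fin n → ℝ) : Prop :=
  ¬ ∃ (x' p' : Fin n → ℝ), x' ∈ X ∧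
      (∀ i, v i * x i - p i ≤ v i * x' i - p' i) ∧
      (∑ i, p i ≤ ∑ i, p' i) ∧
      ((∃ i, v i * x i - p i < v i * x' i - p' i) ∨ ∑ i, p i < ∑ i, p' i)

private lemma sum_update_eq {n : ℕ} (x : Fin n → ℝ) (i : Fin n) (a : ℝ) (S : Finset (Fin n)) :
    ∑ k ∈ S, Function.update x i a k = (∑ k ∈ S, x k) + (if i ∈ S then a - x i else 0) := by
  by_cases h : i ∈ S
  · rw [Finset.sum_update_of_mem h, if_pos h,
      Finset.sum_sdiff_eq_sub (Finset.singleton_subset_iff.mpr h), Finset.sum_singleton]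
    ring
  · rw [Finset.sum_update_of_notMem h, if_neg h, add_zero]

private lemma tight_union {n : ℕ} (f : Finset (Fin n) → ℝ)
    (hsub : ∀ S T : Finset (Fin n), f (S ∪ T) + f (S ∩ T) ≤ f S + f T)
    (x : Fin n → ℝ) (hfeas : ∀ S : Finset (Fin n), ∑ k ∈ S, x k ≤ f S)
    (S T : Finset (Fin n)) (hS : ∑ k ∈ S, x k = f S) (hT : ∑ k ∈ T, x k = f T) :
    ∑ k ∈ S ∪ T, x k = f (S ∪ T) := by
  have h1 := hfeas (S ∪ T)
  have h2 := hfeas (S ∩ T)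
  have h3 := hsub S T
  have h4 : (∑ k ∈ S ∪ T, x k) + ∑ k ∈ S ∩ T, x k = (∑ k ∈ S, x k) + ∑ k ∈ T, x k :=
    Finset.sum_union_inter
  linarith

private lemma univ_tight {n : ℕ} (f : Finset (Fin n) → ℝ)
    (hsub : ∀ S T : Finset (Fin n), f (S ∪ T) + f (S ∩ T) ≤ f S + f T)
    (hf0 : f ∅ = 0)
    (x : Fin n → ℝ) (hfeas : ∀ S : Finset (Fin n), ∑ k ∈ S, x k ≤ f S)
    (h : ∀ i : Fin n, ∃ S : Finset (Fin n), i ∈ S ∧ ∑ k ∈ S, x k = f S) :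
    ∑ k, x k = f Finset.univ := by
  choose g hg1 hg2 using h
  have key : ∀ A : Finset (Fin n), ∑ k ∈ A.sup g, x k = f (A.sup g) := by
    intro A
    induction A using Finset.induction_on with
    | empty => simpa using hf0.symm
    | insert a A hni ih =>
      rw [Finset.sup_insert]
      exact tight_union f hsub x hfeas _ _ (hg2 a) ih
  have hU : (Finset.univ : Finset (Fin n)).sup g = Finset.univ := by
    apply Finset.eq_univ_iff_forall.mpr
    intro i
    exact Finset.mem_of_subset (Finset.le_sup (Finset.mem_univ i)) (hg1 i)
  have := key Finset.univ
  rwa [hU] at this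

theorem pareto_polymatroid_necessity (n : ℕ) (f : Finset (Fin n) → ℝ)
    (hmono : ∀ S T : Finset (Fin n), S ⊆ T → f S ≤ f T)
    (hsub : ∀ S T : Finset (Fin n), f (S ∪ T) + f (S ∩ T) ≤ f S + f T)
    (hf0 : f ∅ = 0)
    (P : Set (Fin n → ℝ))
    (hP : P = {x | (∀ i, 0 ≤ x i) ∧ ∀ S : Finset (Fin n), ∑ i ∈ S, x i ≤ f S})
    (v : Fin n → ℝ) (hv : ∀ i, 0 < v i)
    (B : Fin n → ℝ) (hB : ∀ i, 0 ≤ B i)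
    (x p : Fin n → ℝ) (hx : x ∈ P) (hp : ∀ i, p i ≤ B i)
    (hpareto : ParetoOptimal n P v x p) :
    (∑ i, x i = f Finset.univ) ∧
      ∀ i j : Fin n, p i < B i → v j < v i →
        ∃ S : Finset (Fin n), (∑ k ∈ S, x k = f S) ∧ i ∈ S ∧ j ∉ S := by
  rw [hP] at hx
  obtain ⟨hx0, hxf⟩ := hx
  have part1 : ∑ i, x i = f Finset.univ := by
    by_contra hne
    have hex : ∃ i : Fin n, ∀ S : Finset (Fin n), i ∈ S → ∑ k ∈ S, x k < f S := by
      by_contra h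
      push_neg at h
      apply hne
      apply univ_tight f hsub hf0 x hxf
      intro i
      obtain ⟨S, hiS, hfS⟩ := h i
      exact ⟨S, hiS, le_antisymm (hxf S) hfS⟩
    obtain ⟨i, hi⟩ := hex
    classical
    set 𝒮 : Finset (Finset (Fin n)) :=
      Finset.univ.filter (fun S : Finset (Fin n) => i ∈ S) with h𝒮
    have hne' : 𝒮.Nonempty := ⟨{i}, by simp [h𝒮]⟩
    set ε : ℝ := 𝒮.inf' hne' (fun S => f S - ∑ k ∈ S, x k) with hε'
    have hε : 0 < ε := by
      rw [hε', Finset.lt_inf'_iff]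
      intro S hS
      rw [h𝒮, Finset.mem_filter] at hS
      exact sub_pos.mpr (hi S hS.2)
    apply hpareto
    refine ⟨Function.update x i (x i + ε), p, ?_, ?_, le_refl _, Or.inl ⟨i, ?_⟩⟩
    · rw [hP]
      refine ⟨?_, ?_⟩
      · intro k
        by_cases hk : k = i
        · subst hk; rw [Function.update_self]; have := hx0 k; linarith
        · rw [Function.update_of_ne hk]; exact hx0 k
      · intro S
        rw [sum_update_eq]
        by_cases hiS : i ∈ S
        · have hle : ε ≤ f S - ∑ k ∈ S, x k := by
            rw [hε']
            exact Finset.inf'_le _ (by simp [h𝒮, hiS])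
          rw [if_pos hiS]
          linarith
        · rw [if_neg hiS, add_zero]; exact hxf S
    · intro k
      by_cases hk : k = i
      · subst hk
        rw [Function.update_self]
        have := (hv k).le
        nlinarith
      · rw [Function.update_of_ne hk]
    · rw [Function.update_self]
      have := hv i
      nlinarith
  refine ⟨part1, ?_⟩
  intro i j hpB hvij
  have hij : i ≠ j := fun e => absurd hvij (by rw [e]; exact lt_irrefl _)
  rcases (hx0 j).lt_or_eq with hxj | hxj
  · -- x j > 0
    by_contra hno
    push_neg at hno
    have hstrict : ∀ S : Finset (Fin n), i ∈ S → j ∉ S → ∑ k ∈ S, x k < f S := by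
      intro S h1 h2
      exact lt_of_le_of_ne (hxf S) (fun e => h2 (hno S e h1))
    classical
    set 𝒮 : Finset (Finset (Fin n)) :=
      Finset.univ.filter (fun S : Finset (Fin n) => i ∈ S ∧ j ∉ S) with h𝒮
    have hne' : 𝒮.Nonempty := ⟨{i}, by simp [h𝒮, Ne.symm hij]⟩
    set δ : ℝ := 𝒮.inf' hne' (fun S => f S - ∑ k ∈ S, x k) with hδ'
    set ε : ℝ := min (x j) δ with hε'
    have hδ : 0 < δ := by
      rw [hδ', Finset.lt_inf'_iff]
      intro S hS
      rw [h𝒮, Finset.mem_filter] at hS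
      exact sub_pos.mpr (hstrict S hS.2.1 hS.2.2)
    have hε : 0 < ε := lt_min hxj hδ
    have hεj : ε ≤ x j := min_le_left _ _
    set x' : Fin n → ℝ := Function.update (Function.update x j (x j - ε)) i (x i + ε) with hx'
    set p' : Fin n → ℝ := Function.update (Function.update p j (p j - v j * ε)) i
      (p i + v i * ε) with hp'
    have hx'i : x' i = x i + ε := by rw [hx', Function.update_self]
    have hx'j : x' j = x j - ε := by
      rw [hx', Function.update_of_ne (Ne.symm hij), Function.update_self]
    have hx'k : ∀ k, k ≠ i → k ≠ j → x' k = x k := by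
      intro k h1 h2
      rw [hx', Function.update_of_ne h1, Function.update_of_ne h2]
    have hp'i : p' i = p i + v i * ε := by rw [hp', Function.update_self]
    have hp'j : p' j = p j - v j * ε := by
      rw [hp', Function.update_of_ne (Ne.symm hij), Function.update_self]
    have hp'k : ∀ k, k ≠ i → k ≠ j → p' k = p k := by
      intro k h1 h2
      rw [hp', Function.update_of_ne h1, Function.update_of_ne h2]
    have hsump : ∑ k, p k < ∑ k, p' k := by
      have : ∑ k, p' k = (∑ k, p k) + (v i * ε - v j * ε) := by
        rw [hp', sum_update_eq, sum_update_eq, if_pos (Finset.mem_univ i),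
          if_pos (Finset.mem_univ j), Function.update_of_ne hij]
        ring
      rw [this]
      nlinarith
    apply hpareto
    refine ⟨x', p', ?_, ?_, hsump.le, Or.inr hsump⟩
    · rw [hP]
      refine ⟨?_, ?_⟩
      · intro k
        by_cases h1 : k = i
        · subst h1; rw [hx'i]; have := hx0 k; linarith
        · by_cases h2 : k = j
          · subst h2; rw [hx'j]; linarith
          · rw [hx'k k h1 h2]; exact hx0 k
      · intro S
        have hsum : ∑ k ∈ S, x' k = (∑ k ∈ S, x k) + (if j ∈ S then -ε else 0)
            + (if i ∈ S then ε else 0) := by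
          rw [hx', sum_update_eq, sum_update_eq, Function.update_of_ne hij]
          by_cases h1 : i ∈ S <;> by_cases h2 : j ∈ S <;> simp [h1, h2] <;> ring
        rw [hsum]
        by_cases h1 : i ∈ S <;> by_cases h2 : j ∈ S
        · simp only [if_pos h1, if_pos h2]; have := hxf S; linarith
        · have hle : δ ≤ f S - ∑ k ∈ S, x k := by
            rw [hδ']
            exact Finset.inf'_le _ (by simp [h𝒮, h1, h2])
          have : ε ≤ δ := min_le_right _ _
          simp only [if_pos h1, if_neg h2]
          linarith
        · simp only [if_neg h1, if_pos h2]; have := hxf S; linarith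
        · simp only [if_neg h1, if_neg h2]; have := hxf S; linarith
    · intro k
      by_cases h1 : k = i
      · subst h1; rw [hx'i, hp'i]; ring_nf; exact le_refl _
      · by_cases h2 : k = j
        · subst h2; rw [hx'j, hp'j]; ring_nf; exact le_refl _
        · rw [hx'k k h1 h2, hp'k k h1 h2]
  · -- x j = 0
    refine ⟨Finset.univ.erase j, ?_, Finset.mem_erase.mpr ⟨hij, Finset.mem_univ i⟩,
      Finset.notMem_erase j _⟩
    have h1 : ∑ k ∈ Finset.univ.erase j, x k = (∑ k, x k) - x j :=
      Finset.sum_erase_eq_sub (Finset.mem_univ j)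
    have h2 := hxf (Finset.univ.erase j)
    have h3 : f (Finset.univ.erase j) ≤ f Finset.univ :=
      hmono _ _ (Finset.erase_subset _ _)
    rw [h1, ← hxj, sub_zero, part1]
    rw [h1, ← hxj, sub_zero, part1] at h2
    linarith
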